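/- A coefficient collection β̂ = (β̂_{jk})_{j≠k} is a global minimizer of the SpaCE JAM objective F if and only if, for every ordered pair (j,k) with j ≠ k, writing r_j = x_j − Σ_{l≠j} Ψ_{jl} β̂_{jl} for the full residual: (a) if (β̂_{jk}, β̂_{kj}) ≠ (0,0), then (1/n) Ψ_{jk}ᵀ r_j = λ n β̂_{jk} / (‖Ψ_{jk} β̂_{jk}‖₂² + ‖Ψ_{kj} β̂_{kj}‖₂²)^{1/2}; and (b) if (β̂_{jk}, β̂_{kj}) = (0,0), then ‖(1/n) Ψ_{jk}ᵀ r_j‖₂² + ‖(1/n) Ψ_{kj}ᵀ r_k‖₂² ≤ n λ². -/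

import Mathlib

open Matrix
open scoped Classical

/-- Squared Euclidean norm ‖v‖₂² of a vector in ℝ^n. -/
noncomputable def sqNorm {n : ℕ} (v : Fin n → ℝ) : ℝ := ∑ i, v i ^ 2

/-- The SpaCE JAM objective
F(β) = (1/(2n)) Σ_j ‖x_j − Σ_{k≠j} Ψ_{jk}β_{jk}‖₂²
       + λ Σ_{k>j} (‖Ψ_{jk}β_{jk}‖₂² + ‖Ψ_{kj}β_{kj}‖₂²)^{1/2}. -/
noncomputable def spaceJamObj (n r d : ℕ) (lam : ℝ)
    (x : Fin d → Fin n → ℝ)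
    (Ψ : Fin d → Fin d → Matrix (Fin n) (Fin r) ℝ)
    (β : Fin d → Fin d → Fin r → ℝ) : ℝ :=
  (1 / (2 * (n : ℝ))) * ∑ j, sqNorm (fun i =>
      x j i - ∑ k ∈ Finset.univ.filter (fun k => k ≠ j), (Ψ j k).mulVec (β j k) i)
  + lam * ∑ p ∈ Finset.univ.filter (fun p : Fin d × Fin d => p.1 < p.2),
      Real.sqrt (sqNorm ((Ψ p.1 p.2).mulVec (β p.1 p.2))
        + sqNorm ((Ψ p.2 p.1).mulVec (β p.2 p.1)))

/-! ### Auxiliary lemmas -/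

section Aux
open scoped RealInnerProductSpace

variable {E : Type*} [NormedAddCommGroup E] [InnerProductSpace ℝ E]

/-- Backward: subgradient inequality for μ‖·‖. -/
lemma SJcore_bwd (μ : ℝ) (g w0 : E)
    (h1 : w0 ≠ 0 → g = (μ / ‖w0‖) • w0) (h2 : w0 = 0 → ‖g‖ ≤ μ)
    (hμ : 0 ≤ μ) :
    ∀ w : E, ⟪g, w - w0⟫ ≤ μ * ‖w‖ - μ * ‖w0‖ := by
  intro w
  by_cases h0 : w0 = 0
  · subst h0
    have := h2 rfl
    have hcs : ⟪g, w⟫ ≤ ‖g‖ * ‖w‖ := real_inner_le_norm g w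
    have : ‖g‖ * ‖w‖ ≤ μ * ‖w‖ := mul_le_mul_of_nonneg_right this (norm_nonneg w)
    simp only [sub_zero, norm_zero]
    linarith [real_inner_le_norm g w]
  · have hg := h1 h0
    have hn : (0:ℝ) < ‖w0‖ := norm_pos_iff.2 h0
    rw [hg, inner_smul_left, inner_sub_right]
    have h2' : ⟪w0, w0⟫ = ‖w0‖^2 := real_inner_self_eq_norm_sq w0
    have hcs : ⟪w0, w⟫ ≤ ‖w0‖ * ‖w‖ := real_inner_le_norm w0 w
    have key : (μ / ‖w0‖) * (⟪w0, w⟫ - ⟪w0, w0⟫) ≤ (μ / ‖w0‖) * (‖w0‖ * ‖w‖ - ‖w0‖^2) := by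
      apply mul_le_mul_of_nonneg_left _ (div_nonneg hμ hn.le)
      rw [h2']; linarith
    simp only [RCLike.star_def, starRingEnd_apply, star_trivial]
    calc μ / ‖w0‖ * (⟪w0, w⟫ - ⟪w0, w0⟫) ≤ (μ / ‖w0‖) * (‖w0‖ * ‖w‖ - ‖w0‖^2) := key
      _ = μ * ‖w‖ - μ * ‖w0‖ := by field_simp

/-- Step: quadratic slack can be dropped. -/
lemma SJcore_subgrad (μ : ℝ) (g w0 : E)
    (h : ∀ w : E, 0 ≤ μ * ‖w‖ - μ * ‖w0‖ - ⟪g, w - w0⟫ + (1/2) * ‖w - w0‖^2)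
    (hμ : 0 ≤ μ) :
    ∀ w : E, ⟪g, w - w0⟫ ≤ μ * ‖w‖ - μ * ‖w0‖ := by
  intro w
  by_cases hd : w - w0 = 0
  · rw [hd, inner_zero_right]
    have : w = w0 := sub_eq_zero.1 hd
    rw [this]; linarith
  have hdn : (0:ℝ) < ‖w - w0‖ := norm_pos_iff.2 hd
  by_contra hc
  push_neg at hc
  set A : ℝ := ⟪g, w - w0⟫ - (μ * ‖w‖ - μ * ‖w0‖) with hA
  have hApos : 0 < A := by simp [hA]; linarith
  set t : ℝ := min 1 (A / ‖w - w0‖^2) with ht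
  have ht0 : 0 < t := lt_min one_pos (div_pos hApos (by positivity))
  have ht1 : t ≤ 1 := min_le_left _ _
  have key := h (w0 + t • (w - w0))
  have hnorm : ‖w0 + t • (w - w0)‖ ≤ (1 - t) * ‖w0‖ + t * ‖w‖ := by
    have : w0 + t • (w - w0) = (1 - t) • w0 + t • w := by module
    rw [this]
    calc ‖(1-t) • w0 + t • w‖ ≤ ‖(1-t) • w0‖ + ‖t • w‖ := norm_add_le _ _
      _ = (1-t) * ‖w0‖ + t * ‖w‖ := by
          rw [norm_smul, norm_smul, Real.norm_eq_abs, Real.norm_eq_abs,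
            abs_of_nonneg (by linarith), abs_of_nonneg ht0.le]
  have hsub : w0 + t • (w - w0) - w0 = t • (w - w0) := by abel
  rw [hsub, inner_smul_right, norm_smul, Real.norm_eq_abs, abs_of_nonneg ht0.le] at key
  have hμn : μ * ‖w0 + t • (w - w0)‖ ≤ μ * ((1 - t) * ‖w0‖ + t * ‖w‖) :=
    mul_le_mul_of_nonneg_left hnorm hμ
  have h3 : 0 ≤ t * (μ * ‖w‖ - μ * ‖w0‖) - t * ⟪g, w - w0⟫ + (1/2) * t^2 * ‖w - w0‖^2 := by
    nlinarith [key, hμn]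
  have h4 : 0 ≤ -A + (1/2) * t * ‖w - w0‖^2 := by
    have := mul_le_mul_of_nonneg_left h3 (le_of_lt (inv_pos.2 ht0))
    have h5 : t⁻¹ * (t * (μ * ‖w‖ - μ * ‖w0‖) - t * ⟪g, w - w0⟫ + 1/2 * t^2 * ‖w-w0‖^2)
        = -A + (1/2) * t * ‖w - w0‖^2 := by
      field_simp [hA]; ring
    rw [mul_zero, h5] at this; exact this
  have h6 : (1/2) * t * ‖w - w0‖^2 ≤ A / 2 := by
    have hbt : t * ‖w - w0‖^2 ≤ A :=
      (le_div_iff₀ (by positivity : (0:ℝ) < ‖w - w0‖^2)).1 (min_le_right _ _)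
    linarith
  linarith

/-- Forward: from minimality-style inequality to KKT facts. -/
lemma SJcore_fwd (μ : ℝ) (g w0 : E) (hμ : 0 ≤ μ)
    (h : ∀ w : E, 0 ≤ μ * ‖w‖ - μ * ‖w0‖ - ⟪g, w - w0⟫ + (1/2) * ‖w - w0‖^2) :
    (w0 ≠ 0 → g = (μ / ‖w0‖) • w0) ∧ (w0 = 0 → ‖g‖ ≤ μ) := by
  have hs := SJcore_subgrad μ g w0 h hμ
  have hgle : ‖g‖ ≤ μ := by
    have h1 := hs (w0 + g)
    rw [add_sub_cancel_left, real_inner_self_eq_norm_sq] at h1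
    have h2 : μ * ‖w0 + g‖ ≤ μ * (‖w0‖ + ‖g‖) := mul_le_mul_of_nonneg_left (norm_add_le _ _) hμ
    have h3 : ‖g‖^2 ≤ μ * ‖g‖ := by nlinarith
    rcases eq_or_lt_of_le (norm_nonneg g) with hg0 | hg0
    · linarith
    · nlinarith
  constructor
  · intro h0
    have hn : (0:ℝ) < ‖w0‖ := norm_pos_iff.2 h0
    have e1 := hs 0
    rw [zero_sub, inner_neg_right, norm_zero] at e1
    have e2 := hs ((2:ℝ) • w0)
    have hsub : (2:ℝ) • w0 - w0 = w0 := by module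
    rw [hsub, norm_smul] at e2
    simp only [Real.norm_ofNat] at e2
    have heq : ⟪g, w0⟫ = μ * ‖w0‖ := by nlinarith
    have hgsq : ‖g‖^2 ≤ μ^2 := by nlinarith [norm_nonneg g]
    have hcs := real_inner_le_norm g w0
    have hmg : μ ≤ ‖g‖ := by nlinarith
    have hge : μ^2 ≤ ‖g‖^2 := by nlinarith
    have hgeq : ‖g‖^2 = μ^2 := le_antisymm hgsq hge
    have : ‖g - (μ / ‖w0‖) • w0‖^2 = 0 := by
      rw [norm_sub_sq_real, inner_smul_right, norm_smul]
      rw [Real.norm_eq_abs, abs_of_nonneg (div_nonneg hμ hn.le)]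
      have hv : (μ / ‖w0‖ * ‖w0‖) = μ := by field_simp
      rw [heq, hv, hgeq]
      field_simp
      ring
    have hz : g - (μ / ‖w0‖) • w0 = 0 :=
      norm_eq_zero.1 (pow_eq_zero_iff two_ne_zero |>.1 this)
    exact sub_eq_zero.1 hz
  · intro h0; exact hgle

end Aux

section Bridge
open scoped RealInnerProductSpace
variable {r : ℕ}

noncomputable abbrev SJpairE (r : ℕ) :=
  WithLp 2 (EuclideanSpace ℝ (Fin r) × EuclideanSpace ℝ (Fin r))

noncomputable def SJmkP (u v : Fin r → ℝ) : SJpairE r :=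
  WithLp.toLp 2 ((WithLp.toLp 2 u, WithLp.toLp 2 v) : EuclideanSpace ℝ (Fin r) × EuclideanSpace ℝ (Fin r))

lemma SJmkP_sub (u v u' v' : Fin r → ℝ) :
    SJmkP u v - SJmkP u' v' = SJmkP (u - u') (v - v') := rfl

lemma SJmkP_smul (c : ℝ) (u v : Fin r → ℝ) : c • SJmkP u v = SJmkP (c • u) (c • v) := rfl

lemma SJmkP_eq_iff (u v u' v' : Fin r → ℝ) :
    SJmkP u v = SJmkP u' v' ↔ u = u' ∧ v = v' := by
  simp [SJmkP, Prod.ext_iff]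

lemma SJmkP_eq_zero_iff (u v : Fin r → ℝ) : SJmkP u v = 0 ↔ u = 0 ∧ v = 0 := by
  rw [show (0 : SJpairE r) = SJmkP 0 0 from rfl, SJmkP_eq_iff]

lemma SJnorm_mkP_sq (u v : Fin r → ℝ) : ‖SJmkP u v‖ ^ 2 = sqNorm u + sqNorm v := by
  rw [WithLp.prod_norm_sq_eq_of_L2]
  have h1 : ‖(SJmkP u v).fst‖ ^ 2 = sqNorm u := by
    rw [EuclideanSpace.norm_eq, Real.sq_sqrt (by positivity)]
    simp [sqNorm, SJmkP, Real.norm_eq_abs, sq_abs]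
  have h2 : ‖(SJmkP u v).snd‖ ^ 2 = sqNorm v := by
    rw [EuclideanSpace.norm_eq, Real.sq_sqrt (by positivity)]
    simp [sqNorm, SJmkP, Real.norm_eq_abs, sq_abs]
  rw [h1, h2]

lemma SJnorm_mkP (u v : Fin r → ℝ) : ‖SJmkP u v‖ = Real.sqrt (sqNorm u + sqNorm v) := by
  rw [← SJnorm_mkP_sq, Real.sqrt_sq (norm_nonneg _)]

lemma SJinner_mkP (u v u' v' : Fin r → ℝ) :
    ⟪SJmkP u v, SJmkP u' v'⟫ = u ⬝ᵥ u' + v ⬝ᵥ v' := by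
  rw [WithLp.prod_inner_apply]
  have h1 : ⟪(SJmkP u v).ofLp.1, (SJmkP u' v').ofLp.1⟫ = u ⬝ᵥ u' := by
    rw [PiLp.inner_apply]; simp [SJmkP, dotProduct, RCLike.inner_apply, mul_comm]
  have h2 : ⟪(SJmkP u v).ofLp.2, (SJmkP u' v').ofLp.2⟫ = v ⬝ᵥ v' := by
    rw [PiLp.inner_apply]; simp [SJmkP, dotProduct, RCLike.inner_apply, mul_comm]
  rw [h1, h2]

lemma SJpair_fwd (μ : ℝ) (hμ : 0 ≤ μ) (g1 g2 b1 b2 : Fin r → ℝ)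
    (h : ∀ u v : Fin r → ℝ,
      0 ≤ μ * Real.sqrt (sqNorm u + sqNorm v) - μ * Real.sqrt (sqNorm b1 + sqNorm b2)
        - (g1 ⬝ᵥ (u - b1) + g2 ⬝ᵥ (v - b2))
        + (1/2) * (sqNorm (u - b1) + sqNorm (v - b2))) :
    (¬(b1 = 0 ∧ b2 = 0) →
      g1 = (μ / Real.sqrt (sqNorm b1 + sqNorm b2)) • b1
        ∧ g2 = (μ / Real.sqrt (sqNorm b1 + sqNorm b2)) • b2)
    ∧ ((b1 = 0 ∧ b2 = 0) → sqNorm g1 + sqNorm g2 ≤ μ ^ 2) := by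
  have h' : ∀ w : SJpairE r, 0 ≤ μ * ‖w‖ - μ * ‖SJmkP b1 b2‖ - ⟪(SJmkP g1 g2), w - SJmkP b1 b2⟫
      + (1/2) * ‖w - SJmkP b1 b2‖^2 := by
    intro w
    have hw : w = SJmkP w.ofLp.1.ofLp w.ofLp.2.ofLp := rfl
    rw [hw, SJmkP_sub, SJinner_mkP, SJnorm_mkP, SJnorm_mkP, SJnorm_mkP_sq]
    exact h _ _
  obtain ⟨hc1, hc2⟩ := SJcore_fwd μ (SJmkP g1 g2) (SJmkP b1 b2) hμ h'
  constructor
  · intro hne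
    have h0 : SJmkP b1 b2 ≠ 0 := by rw [Ne, SJmkP_eq_zero_iff]; exact hne
    have := hc1 h0
    rw [SJnorm_mkP, SJmkP_smul, SJmkP_eq_iff] at this
    exact this
  · intro hz
    have h0 : SJmkP b1 b2 = 0 := (SJmkP_eq_zero_iff _ _).2 hz
    have := hc2 h0
    have h2 : ‖SJmkP g1 g2‖^2 ≤ μ^2 := by nlinarith [norm_nonneg (SJmkP g1 g2)]
    rw [SJnorm_mkP_sq] at h2
    exact h2

lemma SJpair_bwd (μ : ℝ) (hμ : 0 ≤ μ) (g1 g2 b1 b2 : Fin r → ℝ)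
    (h1 : ¬(b1 = 0 ∧ b2 = 0) →
      g1 = (μ / Real.sqrt (sqNorm b1 + sqNorm b2)) • b1
        ∧ g2 = (μ / Real.sqrt (sqNorm b1 + sqNorm b2)) • b2)
    (h2 : (b1 = 0 ∧ b2 = 0) → sqNorm g1 + sqNorm g2 ≤ μ ^ 2) :
    ∀ u v : Fin r → ℝ,
      g1 ⬝ᵥ (u - b1) + g2 ⬝ᵥ (v - b2)
        ≤ μ * Real.sqrt (sqNorm u + sqNorm v) - μ * Real.sqrt (sqNorm b1 + sqNorm b2) := by
  have key : ∀ w : SJpairE r, ⟪(SJmkP g1 g2), w - SJmkP b1 b2⟫ ≤ μ * ‖w‖ - μ * ‖SJmkP b1 b2‖ := by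
    apply SJcore_bwd _ _ _ _ _ hμ
    · intro h0
      have hne : ¬(b1 = 0 ∧ b2 = 0) := by rw [Ne, SJmkP_eq_zero_iff] at h0; exact h0
      obtain ⟨e1, e2⟩ := h1 hne
      rw [SJnorm_mkP, SJmkP_smul]
      exact (SJmkP_eq_iff _ _ _ _).2 ⟨e1, e2⟩
    · intro h0
      have hz : b1 = 0 ∧ b2 = 0 := (SJmkP_eq_zero_iff _ _).1 h0
      have := h2 hz
      have hn : ‖SJmkP g1 g2‖^2 ≤ μ^2 := by rw [SJnorm_mkP_sq]; exact this
      nlinarith [norm_nonneg (SJmkP g1 g2)]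
  intro u v
  have := key (SJmkP u v)
  rw [SJmkP_sub, SJinner_mkP, SJnorm_mkP, SJnorm_mkP] at this
  exact this

end Bridge

section Sums

lemma SJsum_offdiag {d : ℕ} (f : Fin d → Fin d → ℝ) :
    ∑ j, ∑ k ∈ Finset.univ.filter (fun k => k ≠ j), f j k
      = ∑ p ∈ Finset.univ.filter (fun p : Fin d × Fin d => p.1 < p.2),
          (f p.1 p.2 + f p.2 p.1) := by
  classical
  have lhs : ∑ j, ∑ k ∈ Finset.univ.filter (fun k => k ≠ j), f j k
      = ∑ p : Fin d × Fin d, if p.2 ≠ p.1 then f p.1 p.2 else 0 := by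
    rw [Fintype.sum_prod_type]
    exact Finset.sum_congr rfl fun j _ => (Finset.sum_filter _ _)
  have rhs : ∑ p ∈ Finset.univ.filter (fun p : Fin d × Fin d => p.1 < p.2),
        (f p.1 p.2 + f p.2 p.1)
      = ∑ p : Fin d × Fin d, if p.1 < p.2 then f p.1 p.2 + f p.2 p.1 else 0 :=
    Finset.sum_filter _ _
  rw [lhs, rhs]
  have swap : ∑ p : Fin d × Fin d, (if p.1 < p.2 then f p.2 p.1 else 0)
      = ∑ p : Fin d × Fin d, (if p.2 < p.1 then f p.1 p.2 else 0) := by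
    apply Fintype.sum_equiv (Equiv.prodComm (Fin d) (Fin d))
    intro p; simp; rfl
  have split : ∀ p : Fin d × Fin d,
      (if p.2 ≠ p.1 then f p.1 p.2 else 0)
        = (if p.1 < p.2 then f p.1 p.2 else 0) + (if p.2 < p.1 then f p.1 p.2 else 0) := by
    intro p
    rcases lt_trichotomy p.1 p.2 with h | h | h
    · simp [h, h.ne', not_lt.2 h.le]
    · simp [h, lt_irrefl]
    · simp [h, h.ne, not_lt.2 h.le]
  simp only [split]
  rw [Finset.sum_add_distrib, ← swap, ← Finset.sum_add_distrib]
  apply Finset.sum_congr rfl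
  intro p _
  by_cases h : p.1 < p.2 <;> simp [h]

lemma SJdot_mulVec {n r : ℕ} (A : Matrix (Fin n) (Fin r) ℝ) (a : Fin n → ℝ) (u : Fin r → ℝ) :
    a ⬝ᵥ (A *ᵥ u) = (Aᵀ *ᵥ a) ⬝ᵥ u := by
  rw [Matrix.dotProduct_mulVec, Matrix.mulVec_transpose]

lemma SJsqNorm_sub {m : ℕ} (a b : Fin m → ℝ) :
    sqNorm (fun i => a i - b i) = sqNorm a - 2 * (a ⬝ᵥ b) + sqNorm b := by
  simp only [sqNorm, dotProduct, Finset.mul_sum, ← Finset.sum_add_distrib,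
    ← Finset.sum_sub_distrib]
  exact Finset.sum_congr rfl fun i _ => by ring

lemma SJsqNorm_nonneg {m : ℕ} (a : Fin m → ℝ) : 0 ≤ sqNorm a :=
  Finset.sum_nonneg fun i _ => sq_nonneg _

lemma SJdot_sum_fun {m r : ℕ} (v : Fin m → ℝ) (s : Finset (Fin r)) (w : Fin r → Fin m → ℝ) :
    v ⬝ᵥ (fun i => ∑ k ∈ s, w k i) = ∑ k ∈ s, v ⬝ᵥ (w k) := by
  simp only [dotProduct, Finset.mul_sum]
  exact Finset.sum_comm

end Sums
/-- **KKT characterization of the SpaCE JAM minimizers.**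
Under the orthonormality condition (1/n)Ψ_{jk}ᵀΨ_{jk} = I_r, a coefficient
collection β̂ is a global minimizer of F iff for every ordered pair (j,k), j ≠ k,
with r_j = x_j − Σ_{l≠j}Ψ_{jl}β̂_{jl}:
(a) if (β̂_{jk},β̂_{kj}) ≠ (0,0) then
    (1/n)Ψ_{jk}ᵀr_j = λn β̂_{jk}/(‖Ψ_{jk}β̂_{jk}‖₂² + ‖Ψ_{kj}β̂_{kj}‖₂²)^{1/2};
(b) if (β̂_{jk},β̂_{kj}) = (0,0) then
    ‖(1/n)Ψ_{jk}ᵀr_j‖₂² + ‖(1/n)Ψ_{kj}ᵀr_k‖₂² ≤ nλ². -/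
theorem spaceJam_global_min_iff_kkt
    (n r d : ℕ) (hn : 0 < n) (lam : ℝ) (hlam : 0 < lam)
    (x : Fin d → Fin n → ℝ)
    (Ψ : Fin d → Fin d → Matrix (Fin n) (Fin r) ℝ)
    (horth : ∀ j k : Fin d, j ≠ k → (1 / (n : ℝ)) • ((Ψ j k)ᵀ * Ψ j k) = 1)
    (βh : Fin d → Fin d → Fin r → ℝ) :
    (∀ β, spaceJamObj n r d lam x Ψ βh ≤ spaceJamObj n r d lam x Ψ β)
    ↔ ∀ j k : Fin d, j ≠ k →
        ((¬(βh j k = 0 ∧ βh k j = 0)) →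
          (1 / (n : ℝ)) • (Ψ j k)ᵀ.mulVec (fun i =>
              x j i - ∑ l ∈ Finset.univ.filter (fun l => l ≠ j),
                (Ψ j l).mulVec (βh j l) i)
            = (lam * n / Real.sqrt (sqNorm ((Ψ j k).mulVec (βh j k))
                + sqNorm ((Ψ k j).mulVec (βh k j)))) • βh j k)
        ∧ ((βh j k = 0 ∧ βh k j = 0) →
          sqNorm ((1 / (n : ℝ)) • (Ψ j k)ᵀ.mulVec (fun i =>
              x j i - ∑ l ∈ Finset.univ.filter (fun l => l ≠ j),
                (Ψ j l).mulVec (βh j l) i))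
          + sqNorm ((1 / (n : ℝ)) • (Ψ k j)ᵀ.mulVec (fun i =>
              x k i - ∑ l ∈ Finset.univ.filter (fun l => l ≠ k),
                (Ψ k l).mulVec (βh k l) i))
            ≤ n * lam ^ 2) := by
  have hnR : (0:ℝ) < n := by exact_mod_cast hn
  have hnne : (n:ℝ) ≠ 0 := ne_of_gt hnR
  set S : Finset (Fin d × Fin d) := Finset.univ.filter (fun p : Fin d × Fin d => p.1 < p.2)
    with hS
  set R : Fin d → Fin n → ℝ := fun j i =>
      x j i - ∑ l ∈ Finset.univ.filter (fun l => l ≠ j), (Ψ j l).mulVec (βh j l) i with hR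
  set g : Fin d → Fin d → Fin r → ℝ := fun j k => (1 / (n : ℝ)) • (Ψ j k)ᵀ.mulVec (R j) with hg
  set μ : ℝ := lam * Real.sqrt n with hμdef
  have hμ : 0 < μ := by
    rw [hμdef]; positivity
  have hμsq : μ ^ 2 = n * lam ^ 2 := by
    rw [hμdef, mul_pow, Real.sq_sqrt hnR.le]; ring
  -- orthonormality consequence
  have hortho' : ∀ j k : Fin d, j ≠ k → ∀ u : Fin r → ℝ,
      sqNorm ((Ψ j k) *ᵥ u) = n * sqNorm u := by
    intro j k hjk u
    have h2 := congrArg (fun M : Matrix (Fin r) (Fin r) ℝ => (n:ℝ) • M) (horth j k hjk)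
    simp only [smul_smul, mul_one_div_cancel hnne, one_smul, smul_eq_mul] at h2
    -- h2 : (Ψ j k)ᵀ * Ψ j k = n • 1
    have e1 : sqNorm ((Ψ j k) *ᵥ u) = ((Ψ j k) *ᵥ u) ⬝ᵥ ((Ψ j k) *ᵥ u) := by
      simp [sqNorm, dotProduct, sq]
    have e2 : sqNorm u = u ⬝ᵥ u := by simp [sqNorm, dotProduct, sq]
    rw [e1, e2, SJdot_mulVec, Matrix.mulVec_mulVec, h2, Matrix.smul_mulVec,
      Matrix.one_mulVec, smul_dotProduct, smul_eq_mul]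
  have hsqΨ : ∀ j k : Fin d, j ≠ k → ∀ u v : Fin r → ℝ,
      Real.sqrt (sqNorm ((Ψ j k) *ᵥ u) + sqNorm ((Ψ k j) *ᵥ v))
        = Real.sqrt n * Real.sqrt (sqNorm u + sqNorm v) := by
    intro j k hjk u v
    rw [hortho' j k hjk, hortho' k j hjk.symm, ← mul_add,
      Real.sqrt_mul (by positivity : (0:ℝ) ≤ (n:ℝ))]
  have hcoef : ∀ j k : Fin d, j ≠ k →
      lam * (n:ℝ) / Real.sqrt (sqNorm ((Ψ j k) *ᵥ (βh j k)) + sqNorm ((Ψ k j) *ᵥ (βh k j)))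
        = μ / Real.sqrt (sqNorm (βh j k) + sqNorm (βh k j)) := by
    intro j k hjk
    rw [hsqΨ j k hjk, hμdef]
    set s := Real.sqrt (sqNorm (βh j k) + sqNorm (βh k j)) with hs
    rcases eq_or_ne s 0 with h | h
    · simp [h]
    · have hsn : Real.sqrt n ≠ 0 := by positivity
      have hself : Real.sqrt n * Real.sqrt n = (n:ℝ) := Real.mul_self_sqrt (by positivity)
      field_simp
      linear_combination (-1 : ℝ) * hself
  -- the master decomposition
  have hdec : ∀ β : Fin d → Fin d → Fin r → ℝ,
      spaceJamObj n r d lam x Ψ β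
        = spaceJamObj n r d lam x Ψ βh
          - ∑ p ∈ S, (g p.1 p.2 ⬝ᵥ (β p.1 p.2 - βh p.1 p.2)
              + g p.2 p.1 ⬝ᵥ (β p.2 p.1 - βh p.2 p.1))
          + (1 / (2 * (n:ℝ))) * ∑ j, sqNorm (fun i =>
              ∑ k ∈ Finset.univ.filter (fun k => k ≠ j), ((Ψ j k) *ᵥ (β j k - βh j k)) i)
          + lam * ∑ p ∈ S,
              (Real.sqrt (sqNorm ((Ψ p.1 p.2) *ᵥ β p.1 p.2) + sqNorm ((Ψ p.2 p.1) *ᵥ β p.2 p.1))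
               - Real.sqrt (sqNorm ((Ψ p.1 p.2) *ᵥ βh p.1 p.2)
                  + sqNorm ((Ψ p.2 p.1) *ᵥ βh p.2 p.1))) := by
    intro β
    have hsq : ∀ j, sqNorm (fun i =>
          x j i - ∑ k ∈ Finset.univ.filter (fun k => k ≠ j), (Ψ j k).mulVec (β j k) i)
        = sqNorm (R j)
          - 2 * ((n:ℝ) * ∑ k ∈ Finset.univ.filter (fun k => k ≠ j),
              (g j k ⬝ᵥ (β j k - βh j k)))
          + sqNorm (fun i =>
              ∑ k ∈ Finset.univ.filter (fun k => k ≠ j), ((Ψ j k) *ᵥ (β j k - βh j k)) i) := by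
      intro j
      have hfun : (fun i =>
            x j i - ∑ k ∈ Finset.univ.filter (fun k => k ≠ j), (Ψ j k).mulVec (β j k) i)
          = fun i => R j i - (fun i' =>
              ∑ k ∈ Finset.univ.filter (fun k => k ≠ j), ((Ψ j k) *ᵥ (β j k - βh j k)) i') i := by
        funext i
        simp only [hR, Matrix.mulVec_sub, Pi.sub_apply, Finset.sum_sub_distrib]
        ring
      rw [hfun, SJsqNorm_sub, SJdot_sum_fun]
      have hterm : ∀ k ∈ Finset.univ.filter (fun k => k ≠ j),
          R j ⬝ᵥ ((Ψ j k) *ᵥ (β j k - βh j k)) = (n:ℝ) * (g j k ⬝ᵥ (β j k - βh j k)) := by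
        intro k _
        rw [SJdot_mulVec]
        have hng : (Ψ j k)ᵀ *ᵥ (R j) = (n:ℝ) • g j k := by
          rw [hg]
          simp only [smul_smul, mul_one_div_cancel hnne, one_smul]
        rw [hng, smul_dotProduct, smul_eq_mul]
      rw [Finset.sum_congr rfl hterm, ← Finset.mul_sum]
    simp only [spaceJamObj]
    rw [Finset.sum_congr rfl (fun j _ => hsq j)]
    have hsplit : ∑ j, (sqNorm (R j)
          - 2 * ((n:ℝ) * ∑ k ∈ Finset.univ.filter (fun k => k ≠ j),
              (g j k ⬝ᵥ (β j k - βh j k)))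
          + sqNorm (fun i =>
              ∑ k ∈ Finset.univ.filter (fun k => k ≠ j), ((Ψ j k) *ᵥ (β j k - βh j k)) i))
        = ∑ j, sqNorm (R j)
          - 2 * (n:ℝ) * ∑ j, ∑ k ∈ Finset.univ.filter (fun k => k ≠ j),
              (g j k ⬝ᵥ (β j k - βh j k))
          + ∑ j, sqNorm (fun i =>
              ∑ k ∈ Finset.univ.filter (fun k => k ≠ j), ((Ψ j k) *ᵥ (β j k - βh j k)) i) := by
      rw [Finset.sum_add_distrib, Finset.sum_sub_distrib, ← Finset.mul_sum, ← Finset.mul_sum]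
      ring
    rw [hsplit, SJsum_offdiag (fun j k => g j k ⬝ᵥ (β j k - βh j k))]
    rw [Finset.sum_sub_distrib]
    have hRj : ∀ j, (fun i =>
          x j i - ∑ l ∈ Finset.univ.filter (fun l => l ≠ j), (Ψ j l).mulVec (βh j l) i)
        = R j := by intro j; rw [hR]
    rw [Finset.sum_congr rfl (fun j _ => congrArg sqNorm (hRj j))]
    field_simp
    ring
  constructor
  · -- minimality → KKT
    intro hmin
    -- helper for ordered pairs j < k
    have main : ∀ j k : Fin d, j < k →
        (¬(βh j k = 0 ∧ βh k j = 0) →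
          g j k = (μ / Real.sqrt (sqNorm (βh j k) + sqNorm (βh k j))) • βh j k
            ∧ g k j = (μ / Real.sqrt (sqNorm (βh j k) + sqNorm (βh k j))) • βh k j)
        ∧ ((βh j k = 0 ∧ βh k j = 0) → sqNorm (g j k) + sqNorm (g k j) ≤ μ ^ 2) := by
      intro j k hlt
      have hjk : j ≠ k := ne_of_lt hlt
      apply SJpair_fwd μ hμ.le
      intro u v
      set β' : Fin d → Fin d → Fin r → ℝ := fun a b =>
        if (a, b) = (j, k) then u else if (a, b) = (k, j) then v else βh a b with hβ'
      have hb1 : β' j k = u := by simp [hβ']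
      have hb2 : β' k j = v := by
        simp [hβ', Prod.mk.injEq, hjk.symm]
      have hb3 : ∀ a b : Fin d, ¬(a = j ∧ b = k) → ¬(a = k ∧ b = j) → β' a b = βh a b := by
        intro a b h1 h2
        simp only [hβ', Prod.mk.injEq]
        rw [if_neg h1, if_neg h2]
      have hm := hmin β'
      rw [hdec β'] at hm
      have hjkS : (j, k) ∈ S := by simp [hS, hlt]
      -- sum 1
      have sum1 : ∑ p ∈ S, (g p.1 p.2 ⬝ᵥ (β' p.1 p.2 - βh p.1 p.2)
            + g p.2 p.1 ⬝ᵥ (β' p.2 p.1 - βh p.2 p.1))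
          = g j k ⬝ᵥ (u - βh j k) + g k j ⬝ᵥ (v - βh k j) := by
        rw [Finset.sum_eq_single_of_mem (j, k) hjkS ?side]
        · rw [hb1, hb2]
        case side =>
          intro p hp hpne
          have hplt : p.1 < p.2 := by
            have := hp; rw [hS, Finset.mem_filter] at this; exact this.2
          have e1 : β' p.1 p.2 = βh p.1 p.2 := by
            apply hb3
            · rintro ⟨h1, h2⟩; exact hpne (Prod.ext h1 h2)
            · rintro ⟨h1, h2⟩; rw [h1, h2] at hplt; exact absurd hplt (not_lt.2 hlt.le)
          have e2 : β' p.2 p.1 = βh p.2 p.1 := by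
            apply hb3
            · rintro ⟨h1, h2⟩; rw [h1, h2] at hplt; exact absurd hplt (not_lt.2 hlt.le)
            · rintro ⟨h1, h2⟩; exact hpne (Prod.ext h2 h1)
          rw [e1, e2, sub_self, sub_self]
          simp
      -- sum 2
      have sum2 : ∑ m, sqNorm (fun i =>
            ∑ l ∈ Finset.univ.filter (fun l => l ≠ m), ((Ψ m l) *ᵥ (β' m l - βh m l)) i)
          = (n:ℝ) * sqNorm (u - βh j k) + (n:ℝ) * sqNorm (v - βh k j) := by
        have hzero : ∀ m ∈ (Finset.univ : Finset (Fin d)), m ∉ ({j, k} : Finset (Fin d)) →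
            sqNorm (fun i =>
              ∑ l ∈ Finset.univ.filter (fun l => l ≠ m), ((Ψ m l) *ᵥ (β' m l - βh m l)) i) = 0 := by
          intro m _ hm
          simp only [Finset.mem_insert, Finset.mem_singleton] at hm
          push_neg at hm
          have : (fun i => ∑ l ∈ Finset.univ.filter (fun l => l ≠ m),
              ((Ψ m l) *ᵥ (β' m l - βh m l)) i) = fun _ => (0:ℝ) := by
            funext i
            apply Finset.sum_eq_zero
            intro l _
            rw [hb3 m l (by tauto) (by tauto), sub_self, Matrix.mulVec_zero]
            rfl
          rw [this]
          simp [sqNorm]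
        rw [← Finset.sum_subset (Finset.subset_univ ({j, k} : Finset (Fin d))) hzero,
          Finset.sum_pair hjk]
        have hj : (fun i => ∑ l ∈ Finset.univ.filter (fun l => l ≠ j),
            ((Ψ j l) *ᵥ (β' j l - βh j l)) i) = fun i => ((Ψ j k) *ᵥ (u - βh j k)) i := by
          funext i
          rw [Finset.sum_eq_single_of_mem k (by simp [hjk.symm])]
          · rw [hb1]
          · intro l _ hl
            rw [hb3 j l (by tauto) (fun h => hjk h.1), sub_self, Matrix.mulVec_zero]
            rfl
        have hk : (fun i => ∑ l ∈ Finset.univ.filter (fun l => l ≠ k),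
            ((Ψ k l) *ᵥ (β' k l - βh k l)) i) = fun i => ((Ψ k j) *ᵥ (v - βh k j)) i := by
          funext i
          rw [Finset.sum_eq_single_of_mem j (by simp [hjk])]
          · rw [hb2]
          · intro l _ hl
            rw [hb3 k l (fun h => hjk h.1.symm) (by tauto), sub_self, Matrix.mulVec_zero]
            rfl
        rw [hj, hk]
        rw [show (fun i => ((Ψ j k) *ᵥ (u - βh j k)) i) = (Ψ j k) *ᵥ (u - βh j k) from rfl,
          show (fun i => ((Ψ k j) *ᵥ (v - βh k j)) i) = (Ψ k j) *ᵥ (v - βh k j) from rfl,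
          hortho' j k hjk, hortho' k j hjk.symm]
      -- sum 3
      have sum3 : ∑ p ∈ S,
            (Real.sqrt (sqNorm ((Ψ p.1 p.2) *ᵥ β' p.1 p.2) + sqNorm ((Ψ p.2 p.1) *ᵥ β' p.2 p.1))
             - Real.sqrt (sqNorm ((Ψ p.1 p.2) *ᵥ βh p.1 p.2)
                + sqNorm ((Ψ p.2 p.1) *ᵥ βh p.2 p.1)))
          = Real.sqrt (sqNorm ((Ψ j k) *ᵥ u) + sqNorm ((Ψ k j) *ᵥ v))
            - Real.sqrt (sqNorm ((Ψ j k) *ᵥ βh j k) + sqNorm ((Ψ k j) *ᵥ βh k j)) := by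
        rw [Finset.sum_eq_single_of_mem (j, k) hjkS ?side2]
        · rw [hb1, hb2]
        case side2 =>
          intro p hp hpne
          have hplt : p.1 < p.2 := by
            have := hp; rw [hS, Finset.mem_filter] at this; exact this.2
          have e1 : β' p.1 p.2 = βh p.1 p.2 := by
            apply hb3
            · rintro ⟨h1, h2⟩; exact hpne (Prod.ext h1 h2)
            · rintro ⟨h1, h2⟩; rw [h1, h2] at hplt; exact absurd hplt (not_lt.2 hlt.le)
          have e2 : β' p.2 p.1 = βh p.2 p.1 := by
            apply hb3
            · rintro ⟨h1, h2⟩; rw [h1, h2] at hplt; exact absurd hplt (not_lt.2 hlt.le)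
            · rintro ⟨h1, h2⟩; exact hpne (Prod.ext h2 h1)
          rw [e1, e2, sub_self]
      rw [sum1, sum2, sum3, hsqΨ j k hjk, hsqΨ j k hjk] at hm
      have hhalf : (1 / (2 * (n:ℝ))) * ((n:ℝ) * sqNorm (u - βh j k) + (n:ℝ) * sqNorm (v - βh k j))
          = (1/2) * (sqNorm (u - βh j k) + sqNorm (v - βh k j)) := by
        field_simp
      rw [hhalf] at hm
      have hmain := hmin β'
      -- hm : F βh ≤ F βh - ... + ... + ...
      have := hm
      rw [hμdef]
      nlinarith [this]
    -- glue
    intro j k hjk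
    rcases lt_or_gt_of_ne hjk with hlt | hlt
    · obtain ⟨A, B⟩ := main j k hlt
      constructor
      · intro hne
        have ha := (A hne).1
        rw [hcoef j k hjk]
        simp only [hg, hR] at ha
        exact ha
      · intro hz
        have hb := B hz
        simp only [hg, hR] at hb
        rw [← hμsq]
        exact hb
    · obtain ⟨A, B⟩ := main k j hlt
      constructor
      · intro hne
        have ha := (A (by tauto)).2
        rw [hcoef j k hjk, add_comm (sqNorm (βh j k)) (sqNorm (βh k j))]
        simp only [hg, hR] at ha
        exact ha
      · intro hz
        have hb := B ⟨hz.2, hz.1⟩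
        simp only [hg, hR] at hb
        rw [← hμsq]
        linarith
  · -- KKT → minimality
    intro hK β
    rw [hdec β]
    have hE : 0 ≤ (1 / (2 * (n:ℝ))) * ∑ j, sqNorm (fun i =>
        ∑ k ∈ Finset.univ.filter (fun k => k ≠ j), ((Ψ j k) *ᵥ (β j k - βh j k)) i) := by
      apply mul_nonneg (by positivity)
      exact Finset.sum_nonneg fun j _ => SJsqNorm_nonneg _
    have hpen : ∑ p ∈ S, (g p.1 p.2 ⬝ᵥ (β p.1 p.2 - βh p.1 p.2)
          + g p.2 p.1 ⬝ᵥ (β p.2 p.1 - βh p.2 p.1))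
        ≤ lam * ∑ p ∈ S,
            (Real.sqrt (sqNorm ((Ψ p.1 p.2) *ᵥ β p.1 p.2) + sqNorm ((Ψ p.2 p.1) *ᵥ β p.2 p.1))
             - Real.sqrt (sqNorm ((Ψ p.1 p.2) *ᵥ βh p.1 p.2)
                + sqNorm ((Ψ p.2 p.1) *ᵥ βh p.2 p.1))) := by
      rw [Finset.mul_sum]
      apply Finset.sum_le_sum
      intro p hp
      have hplt : p.1 < p.2 := by
        have := hp; rw [hS, Finset.mem_filter] at this; exact this.2
      have hpne : p.1 ≠ p.2 := ne_of_lt hplt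
      have h1 : ¬(βh p.1 p.2 = 0 ∧ βh p.2 p.1 = 0) →
          g p.1 p.2 = (μ / Real.sqrt (sqNorm (βh p.1 p.2) + sqNorm (βh p.2 p.1))) • βh p.1 p.2
            ∧ g p.2 p.1 = (μ / Real.sqrt (sqNorm (βh p.1 p.2) + sqNorm (βh p.2 p.1))) • βh p.2 p.1 := by
        intro hne
        constructor
        · have ha := (hK p.1 p.2 hpne).1 hne
          rw [hcoef p.1 p.2 hpne] at ha
          simp only [hg, hR]
          exact ha
        · have ha := (hK p.2 p.1 hpne.symm).1 (by tauto)
          rw [hcoef p.2 p.1 hpne.symm,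
            add_comm (sqNorm (βh p.2 p.1)) (sqNorm (βh p.1 p.2))] at ha
          simp only [hg, hR]
          exact ha
      have h2 : (βh p.1 p.2 = 0 ∧ βh p.2 p.1 = 0) →
          sqNorm (g p.1 p.2) + sqNorm (g p.2 p.1) ≤ μ ^ 2 := by
        intro hz
        have hb := (hK p.1 p.2 hpne).2 hz
        simp only [hg, hR]
        rw [hμsq]
        exact hb
      have key := SJpair_bwd μ hμ.le (g p.1 p.2) (g p.2 p.1) (βh p.1 p.2) (βh p.2 p.1)
        h1 h2 (β p.1 p.2) (β p.2 p.1)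
      rw [hsqΨ p.1 p.2 hpne, hsqΨ p.1 p.2 hpne]
      calc g p.1 p.2 ⬝ᵥ (β p.1 p.2 - βh p.1 p.2) + g p.2 p.1 ⬝ᵥ (β p.2 p.1 - βh p.2 p.1)
          ≤ μ * Real.sqrt (sqNorm (β p.1 p.2) + sqNorm (β p.2 p.1))
            - μ * Real.sqrt (sqNorm (βh p.1 p.2) + sqNorm (βh p.2 p.1)) := key
        _ = lam * (Real.sqrt ↑n * Real.sqrt (sqNorm (β p.1 p.2) + sqNorm (β p.2 p.1))
            - Real.sqrt ↑n * Real.sqrt (sqNorm (βh p.1 p.2) + sqNorm (βh p.2 p.1))) := by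
            rw [hμdef]; ring
    linarith
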